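/- Every iterated derivative of the Altes chirplet vanishes at the origin from the right: for every natural number n, the n-th derivative of the map ω ↦ exp(-κ·(log(ω/ω₀))²)·exp(2πi·log ω/log λ) on the interval (0,∞) tends to 0 as ω → 0⁺. -/

import Mathlib

open Filter Topology

namespace AltesAux

/-- The "model" function: polynomial in `log ω` times Gaussian-type exponential in `log ω`. -/
noncomputable def model (κ : ℝ) (p : Polynomial ℂ) (b : ℂ) : ℝ → ℂ :=
  fun ω : ℝ => p.eval (Real.log ω : ℂ) *
    Complex.exp (-(κ : ℂ) * (Real.log ω : ℂ) ^ 2 + b * (Real.log ω : ℂ))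

lemma abs_pow_mul_exp_tendsto (N : ℕ) :
    Tendsto (fun t : ℝ => |t| ^ N * Real.exp t) atBot (𝓝 0) := by
  have h := (Real.tendsto_pow_mul_exp_neg_atTop_nhds_zero N).comp tendsto_neg_atBot_atTop
  refine h.congr' ?_
  filter_upwards [eventually_le_atBot (0 : ℝ)] with t ht
  simp only [Function.comp_apply, neg_neg]
  rw [abs_of_nonpos ht]

/-- The model inner function tends to zero at `-∞`. -/
lemma inner_tendsto (κ : ℝ) (hκ : 0 < κ) (p : Polynomial ℂ) (b : ℂ) :
    Tendsto (fun t : ℝ => p.eval (t : ℂ) *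
      Complex.exp (-(κ : ℂ) * (t : ℂ) ^ 2 + b * (t : ℂ))) atBot (𝓝 0) := by
  rw [tendsto_zero_iff_norm_tendsto_zero]
  set N := p.natDegree with hN
  set C : ℝ := ∑ i ∈ Finset.range (N + 1), ‖p.coeff i‖ with hC
  have hC0 : 0 ≤ C := Finset.sum_nonneg fun i _ => norm_nonneg _
  have hbig : Tendsto (fun t : ℝ => C * (|t| ^ N * Real.exp t)) atBot (𝓝 0) := by
    simpa using (abs_pow_mul_exp_tendsto N).const_mul C
  refine squeeze_zero' (Eventually.of_forall fun t => norm_nonneg _) ?_ hbig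
  filter_upwards [eventually_le_atBot (-1 : ℝ), eventually_le_atBot ((b.re - 1) / κ),
      eventually_le_atBot (0 : ℝ)] with t ht1 htb ht0
  have habs : 1 ≤ |t| := by
    rw [abs_of_nonpos ht0]; linarith
  have hnorm_eval : ‖p.eval (t : ℂ)‖ ≤ C * |t| ^ N := by
    rw [Polynomial.eval_eq_sum_range]
    calc ‖∑ i ∈ Finset.range (N + 1), p.coeff i * (t : ℂ) ^ i‖
        ≤ ∑ i ∈ Finset.range (N + 1), ‖p.coeff i * (t : ℂ) ^ i‖ := norm_sum_le _ _
      _ ≤ ∑ i ∈ Finset.range (N + 1), ‖p.coeff i‖ * |t| ^ N := by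
          refine Finset.sum_le_sum fun i hi => ?_
          rw [norm_mul, norm_pow, Complex.norm_real, Real.norm_eq_abs]
          have : |t| ^ i ≤ |t| ^ N :=
            pow_le_pow_right₀ habs (Nat.lt_succ_iff.mp (Finset.mem_range.mp hi))
          exact mul_le_mul_of_nonneg_left this (norm_nonneg _)
      _ = C * |t| ^ N := by rw [← Finset.sum_mul]
  have hre : (-(κ : ℂ) * (t : ℂ) ^ 2 + b * (t : ℂ)).re = -κ * t ^ 2 + b.re * t := by
    simp [Complex.add_re, Complex.mul_re, Complex.ofReal_re, Complex.ofReal_im, pow_two]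
  have hexp : Real.exp ((-(κ : ℂ) * (t : ℂ) ^ 2 + b * (t : ℂ)).re) ≤ Real.exp t := by
    rw [hre]
    apply Real.exp_le_exp.mpr
    have hk : t * κ ≤ b.re - 1 := (le_div_iff₀ hκ).mp htb
    have key : t * (b.re - 1 - κ * t) ≤ 0 :=
      mul_nonpos_of_nonpos_of_nonneg ht0 (by nlinarith)
    nlinarith [key]
  calc ‖p.eval (t : ℂ) * Complex.exp (-(κ : ℂ) * (t : ℂ) ^ 2 + b * (t : ℂ))‖
      = ‖p.eval (t : ℂ)‖ * Real.exp ((-(κ : ℂ) * (t : ℂ) ^ 2 + b * (t : ℂ)).re) := by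
        rw [norm_mul, Complex.norm_exp]
    _ ≤ (C * |t| ^ N) * Real.exp t := by
        apply mul_le_mul hnorm_eval hexp (Real.exp_pos _).le
        positivity
    _ = C * (|t| ^ N * Real.exp t) := by ring

/-- Derivative of the model function at a positive point. -/
lemma model_hasDerivAt (κ : ℝ) (p : Polynomial ℂ) (b : ℂ) {ω : ℝ} (hω : 0 < ω) :
    HasDerivAt (model κ p b)
      (model κ (p.derivative + p * (Polynomial.C b - Polynomial.C (2 * κ : ℂ) * Polynomial.X))
        (b - 1) ω) ω := by
  set t : ℝ := Real.log ω with htdef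
  -- complex-variable derivative of the inner function
  have h1 : HasDerivAt (fun z : ℂ => p.eval z) (p.derivative.eval (t : ℂ)) (t : ℂ) :=
    p.hasDerivAt _
  have h2 : HasDerivAt (fun z : ℂ => -(κ : ℂ) * z ^ 2 + b * z)
      (-(κ : ℂ) * (2 * (t : ℂ)) + b) (t : ℂ) := by
    have ha : HasDerivAt (fun z : ℂ => -(κ : ℂ) * z ^ 2) (-(κ : ℂ) * (2 * (t : ℂ) ^ 1)) (t : ℂ) :=
      (hasDerivAt_pow 2 (t : ℂ)).const_mul _
    have hb : HasDerivAt (fun z : ℂ => b * z) (b * 1) (t : ℂ) :=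
      (hasDerivAt_id (t : ℂ)).const_mul b
    have hab := ha.add hb
    simp only [pow_one, mul_one] at hab
    exact hab
  have h3 := h2.cexp
  have hg : HasDerivAt (fun z : ℂ => p.eval z * Complex.exp (-(κ : ℂ) * z ^ 2 + b * z))
      (p.derivative.eval (t : ℂ) * Complex.exp (-(κ : ℂ) * (t : ℂ) ^ 2 + b * (t : ℂ)) +
        p.eval (t : ℂ) * (Complex.exp (-(κ : ℂ) * (t : ℂ) ^ 2 + b * (t : ℂ)) *
          (-(κ : ℂ) * (2 * (t : ℂ)) + b))) (t : ℂ) := h1.mul h3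
  -- restrict to the real line
  have hgr := hg.comp_ofReal
  -- compose with log
  have hlog : HasDerivAt Real.log ω⁻¹ ω := Real.hasDerivAt_log (ne_of_gt hω)
  have hcomp := hgr.scomp ω hlog
  have heq : ((fun y : ℝ => p.eval (y : ℂ) * Complex.exp (-(κ : ℂ) * (y : ℂ) ^ 2 + b * (y : ℂ)))
      ∘ Real.log) = model κ p b := rfl
  rw [heq] at hcomp
  refine hcomp.congr_deriv (Eq.symm ?_)
  -- identify the derivative values
  have hωexp : (ω⁻¹ : ℝ) = Real.exp (-t) := by
    rw [Real.exp_neg, htdef, Real.exp_log hω]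
  have hx : ((ω⁻¹ : ℝ) : ℂ) = Complex.exp (-(t : ℂ)) := by
    rw [hωexp, Complex.ofReal_exp, Complex.ofReal_neg]
  rw [Complex.real_smul, hx]
  simp only [model, Polynomial.eval_add, Polynomial.eval_mul, Polynomial.eval_sub,
    Polynomial.eval_C, Polynomial.eval_X, ← htdef]
  rw [show (-(κ : ℂ) * (t : ℂ) ^ 2 + (b - 1) * (t : ℂ)) =
      (-(κ : ℂ) * (t : ℂ) ^ 2 + b * (t : ℂ)) + (-(t : ℂ)) by ring, Complex.exp_add]
  ring

/-- Every iterated derivative within `Ioi 0` of a function agreeing with a model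
function is again (on `Ioi 0`) a model function. -/
lemma key (κ : ℝ) (F : ℝ → ℂ) (p₀ : Polynomial ℂ) (b₀ : ℂ)
    (h0 : Set.EqOn F (model κ p₀ b₀) (Set.Ioi 0)) :
    ∀ n : ℕ, ∃ (p : Polynomial ℂ) (b : ℂ),
      Set.EqOn (iteratedDerivWithin n F (Set.Ioi 0)) (model κ p b) (Set.Ioi 0) := by
  intro n
  induction n with
  | zero => exact ⟨p₀, b₀, by rwa [iteratedDerivWithin_zero]⟩
  | succ n ih =>
    obtain ⟨p, b, hp⟩ := ih
    refine ⟨p.derivative + p * (Polynomial.C b - Polynomial.C (2 * κ : ℂ) * Polynomial.X),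
      b - 1, fun x hx => ?_⟩
    have hu : UniqueDiffWithinAt ℝ (Set.Ioi (0 : ℝ)) x := isOpen_Ioi.uniqueDiffWithinAt hx
    rw [iteratedDerivWithin_succ, derivWithin_congr hp (hp hx),
      derivWithin_of_isOpen isOpen_Ioi hx, (model_hasDerivAt κ p b hx).deriv]

end AltesAux

/-- Every iterated derivative (within (0,∞)) of the Altes chirplet
formula tends to 0 as ω → 0⁺. -/
theorem altes_iteratedDeriv_tendsto_zero (κ ω₀ lam : ℝ) (hκ : 0 < κ)
    (hω₀ : 0 < ω₀) (hlam : 0 < lam) (hlam1 : lam ≠ 1) (n : ℕ) :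
    Tendsto
      (fun ω : ℝ =>
        iteratedDerivWithin n
          (fun ω : ℝ =>
            Complex.exp (-(↑(κ * (Real.log (ω / ω₀)) ^ 2) : ℂ)) *
              Complex.exp (2 * Real.pi * Complex.I * Real.log ω / Real.log lam))
          (Set.Ioi (0 : ℝ)) ω)
      (𝓝[>] (0 : ℝ)) (𝓝 0) := by
  set a : ℝ := Real.log ω₀ with ha
  set c : ℂ := 2 * Real.pi * Complex.I / (Real.log lam : ℂ) with hc
  set p₀ : Polynomial ℂ := Polynomial.C (Complex.exp (-(κ : ℂ) * (a : ℂ) ^ 2)) with hp₀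
  set b₀ : ℂ := 2 * (κ : ℂ) * (a : ℂ) + c with hb₀
  have h0 : Set.EqOn
      (fun ω : ℝ =>
        Complex.exp (-(↑(κ * (Real.log (ω / ω₀)) ^ 2) : ℂ)) *
          Complex.exp (2 * Real.pi * Complex.I * Real.log ω / Real.log lam))
      (AltesAux.model κ p₀ b₀) (Set.Ioi 0) := by
    intro ω hω
    have hω0 : (0 : ℝ) < ω := hω
    simp only [AltesAux.model, hp₀, Polynomial.eval_C]
    rw [Real.log_div hω0.ne' hω₀.ne', ← Complex.exp_add, ← Complex.exp_add]
    congr 1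
    rw [hb₀, hc, ← ha]
    push_cast
    ring
  obtain ⟨p, b, hp⟩ := AltesAux.key κ _ p₀ b₀ h0 n
  have hmod : Tendsto (AltesAux.model κ p b) (𝓝[>] (0 : ℝ)) (𝓝 0) :=
    (AltesAux.inner_tendsto κ hκ p b).comp Real.tendsto_log_nhdsGT_zero
  refine hmod.congr' ?_
  filter_upwards [self_mem_nhdsWithin] with ω hω
  exact (hp hω).symm
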